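/- Let a and b be real numbers, α = a + i·b, and let z = u + i·v be a complex number satisfying 2·|z − a|² = b². Let w be a complex number with w ≠ 0 and w² = (z − α)(z − conj(α)). Define h_x = −w, h_t = −2(z + a)·w, h_{xz} = −(z − a)/w, and h_{tz} = −2(z² − a²)/w − 2w. Then Im(h_x)·h_{tz} − Im(h_t)·h_{xz} = (2(z − a)/w)·( 3(u − a)·Im w − v·Re w ). -/

import Mathlib

open Complex

/-- Formulas (4.17)–(4.18) of the paper: on the circle `|z − a| = b/√2`, the determinant
with rows `(Im h_x, Im h_t)` and `(h_{xz}, h_{tz})` (genus-zero phase function) reduces to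
`(2(z−a)/w)·(3(u−a)·Im w − v·Re w)`, where `u = Re z`, `v = Im z`. -/
theorem genus_zero_determinant_reduction (a b : ℝ) (z w : ℂ)
    (hc : 2 * ‖z - (a : ℂ)‖^2 = b ^ 2)
    (hw : w ≠ 0) (hw2 : w ^ 2 = (z - (a + b * I)) * (z - (starRingEnd ℂ) (a + b * I))) :
    (((-w).im : ℂ)) * (-2 * (z ^ 2 - (a : ℂ) ^ 2) / w - 2 * w) -
        (((-2 * (z + (a : ℂ)) * w).im : ℂ)) * (-(z - (a : ℂ)) / w) =
      (2 * (z - (a : ℂ)) / w) * ((3 * (z.re - a) * w.im - z.im * w.re : ℝ) : ℂ) := by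
  have hb2 : (b:ℝ)^2 = 2*((z.re - a)^2 + z.im^2) := by
    rw [← hc, Complex.sq_norm, Complex.normSq_apply]
    simp [pow_two]
  have hb2c : ((b:ℂ))^2 = 2*(((z.re:ℂ) - (a:ℂ))^2 + (z.im:ℂ)^2) := by
    exact_mod_cast congrArg (Complex.ofReal) hb2
  simp only [map_add, map_mul, Complex.conj_ofReal, Complex.conj_I] at hw2
  have hw2c : w ^ 2 = (z - (a:ℂ))^2 + 2*(((z.re:ℂ) - (a:ℂ))^2 + (z.im:ℂ)^2) := by
    have hI : I^2 = -1 := Complex.I_sq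
    linear_combination hw2 + hb2c - hI * (b:ℂ)^2
  have hz : z = (z.re : ℂ) + (z.im : ℂ) * I := (Complex.re_add_im z).symm
  simp only [Complex.neg_im, Complex.mul_im, Complex.mul_re, Complex.add_re, Complex.add_im,
    Complex.ofReal_re, Complex.ofReal_im, Complex.neg_re, Complex.re_ofNat, Complex.im_ofNat]
  push_cast
  field_simp
  linear_combination (2 * (w.im : ℂ)) * hw2c +
    (2 * (w.im : ℂ) * (3*(z.re:ℂ) - 3*(a:ℂ) - (z - (z.re:ℂ)))
      + 2 * (w.im:ℂ) * (z - (a:ℂ))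
      + 4 * (w.im:ℂ) * (z + 2*(a:ℂ) - 3*(z.re:ℂ) + (z.im:ℂ)*I)) * hz
    + (4 * (w.im:ℂ) * (z.im:ℂ)^2) * Complex.I_sq
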